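/- Coercivity of the least-squares bilinear form: let Ω ⊂ ℝ^d be bounded Lipschitz, A ∈ L^∞(Ω)^{d×d} symmetric with smallest eigenvalue ≥ α₀ > 0 a.e., β ∈ L^∞(Ω)^d with div β ∈ L^∞(Ω), γ ∈ L^∞(Ω), and (1/2)div β + γ ≥ 0 a.e. For k ∈ (0,T], define on U = H¹_0(Ω) × H(div,Ω) the form b((u,σ),(v,τ)) = ⟨u, −div τ − β·∇v + γv⟩ + ⟨−div σ − β·∇u + γu, v⟩ + k⟨−div σ − β·∇u + γu, −div τ − β·∇v + γv⟩ + ⟨A^{1/2}∇u − A^{−1/2}σ, A^{1/2}∇v − A^{−1/2}τ⟩. Then there exists c > 0 independent of k such that b((u,σ),(u,σ)) ≥ c·(‖∇u‖² + ‖σ‖² + k‖div σ‖²) for all (u,σ) ∈ U. -/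
import Mathlib


open RealInnerProductSpace

/-- Coercivity of the least-squares bilinear form `b` (Lemma 1), in an abstract
Hilbert-space formulation: `H` plays the role of `H¹₀(Ω)`, `S` of `H(div,Ω)`,
`L` of `L²(Ω)` and `Lv` of `L²(Ω)^d`.  The maps are: `ι` the embedding of `H¹₀`
into `L²`, `grad` the gradient, `Bgrad : u ↦ β·∇u`, `Gmul : u ↦ γu`, `ιS` the
embedding of `H(div)` into `L²(Ω)^d`, `dvg` the divergence, and `Asq`, `AsqInv`
multiplication by `A^{1/2}` and `A^{−1/2}`.  The hypotheses encode Friedrichs'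
inequality, boundedness of the coefficients, the sign condition
`(1/2)div β + γ ≥ 0`, integration by parts, and uniform positive definiteness
and boundedness of `A`.  The coercivity constant `c` is independent of `k ∈ (0,T]`. -/
theorem stmt7 {H S L Lv : Type*}
    [AddCommGroup H] [Module ℝ H] [AddCommGroup S] [Module ℝ S]
    [NormedAddCommGroup L] [InnerProductSpace ℝ L]
    [NormedAddCommGroup Lv] [InnerProductSpace ℝ Lv]
    (ι : H →ₗ[ℝ] L) (grad : H →ₗ[ℝ] Lv) (Bgrad Gmul : H →ₗ[ℝ] L)
    (ιS : S →ₗ[ℝ] Lv) (dvg : S →ₗ[ℝ] L)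
    (Asq AsqInv : Lv →ₗ[ℝ] Lv)
    (T CF Cβ Cγ α₀ MA : ℝ)
    (hT : 0 < T) (hα₀ : 0 < α₀) (hMA : 0 < MA) (hCF : 0 < CF)
    (hF : ∀ uu : H, ‖ι uu‖ ≤ CF * ‖grad uu‖)
    (hβb : ∀ uu : H, ‖Bgrad uu‖ ≤ Cβ * ‖grad uu‖)
    (hγb : ∀ uu : H, ‖Gmul uu‖ ≤ Cγ * ‖ι uu‖)
    (hpos : ∀ uu : H, 0 ≤ ⟪ι uu, Gmul uu - Bgrad uu⟫)
    (hibp : ∀ (uu : H) (σ : S), ⟪ι uu, dvg σ⟫ = - ⟪grad uu, ιS σ⟫)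
    (hA1 : ∀ x y : Lv, ⟪Asq x, AsqInv y⟫ = ⟪x, y⟫)
    (hA2 : ∀ x : Lv, α₀ * ‖x‖ ^ 2 ≤ ‖Asq x‖ ^ 2)
    (hA3 : ∀ x : Lv, ‖x‖ ^ 2 ≤ MA * ‖AsqInv x‖ ^ 2) :
    ∃ c > 0, ∀ k : ℝ, 0 < k → k ≤ T → ∀ (u : H) (σ : S),
      c * (‖grad u‖ ^ 2 + ‖ιS σ‖ ^ 2 + k * ‖dvg σ‖ ^ 2) ≤
        ⟪ι u, - dvg σ - Bgrad u + Gmul u⟫ + ⟪- dvg σ - Bgrad u + Gmul u, ι u⟫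
        + k * ‖- dvg σ - Bgrad u + Gmul u‖ ^ 2
        + ‖Asq (grad u) - AsqInv (ιS σ)‖ ^ 2 := by
  set K := Cβ ^ 2 + CF ^ 2 * Cγ ^ 2 with hKdefK
  have hKnn : 0 ≤ K := by positivity
  have hden : (0:ℝ) < 1 + 3 * T * K := by positivity
  set c := min (min (α₀ / (1 + 3 * T * K)) MA⁻¹) (1/3) with hcdef
  have hc : 0 < c := by
    apply lt_min (lt_min _ _) (by norm_num)
    · positivity
    · positivity
  have hcg : c * (1 + 3 * T * K) ≤ α₀ := by
    have h1 : c ≤ α₀ / (1 + 3 * T * K) := le_trans (min_le_left _ _) (min_le_left _ _)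
    rwa [le_div_iff₀ hden] at h1
  have hcMA : c ≤ MA⁻¹ := le_trans (min_le_left _ _) (min_le_right _ _)
  have hc3 : 3 * c ≤ 1 := by
    have := min_le_right (min (α₀ / (1 + 3 * T * K)) MA⁻¹) (1/3)
    rw [← hcdef] at this; linarith
  refine ⟨c, hc, ?_⟩
  intro k hk hkT u σ
  set g := grad u with hg
  set s := ιS σ with hs
  set d := dvg σ with hd
  set B := Bgrad u with hB
  set G := Gmul u with hG
  set R := -d - B + G with hR
  have h1 : ⟪ι u, R⟫ = ⟪g, s⟫ + ⟪ι u, G - B⟫ := by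
    have hib := hibp u σ
    rw [hR]
    rw [show -d - B + G = -d + (G - B) by abel]
    rw [inner_add_right, inner_neg_right, hib]
    ring
  have h2 : ⟪R, ι u⟫ = ⟪ι u, R⟫ := real_inner_comm _ _
  have h3 : ‖Asq g - AsqInv s‖ ^ 2 = ‖Asq g‖ ^ 2 - 2 * ⟪g, s⟫ + ‖AsqInv s‖ ^ 2 := by
    rw [@norm_sub_sq_real, hA1]
  have hsign : 0 ≤ ⟪ι u, G - B⟫ := hpos u
  have hA2g : α₀ * ‖g‖ ^ 2 ≤ ‖Asq g‖ ^ 2 := hA2 g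
  have hMAs : MA⁻¹ * ‖s‖ ^ 2 ≤ ‖AsqInv s‖ ^ 2 := by
    have := hA3 s
    rw [inv_mul_le_iff₀ hMA]
    linarith
  have hB2 : ‖B‖ ^ 2 ≤ Cβ ^ 2 * ‖g‖ ^ 2 := by
    have := pow_le_pow_left₀ (norm_nonneg B) (hβb u) 2
    calc ‖B‖ ^ 2 ≤ (Cβ * ‖g‖) ^ 2 := this
      _ = Cβ ^ 2 * ‖g‖ ^ 2 := by ring
  have hiu2 : ‖ι u‖ ^ 2 ≤ CF ^ 2 * ‖g‖ ^ 2 := by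
    have := pow_le_pow_left₀ (norm_nonneg (ι u)) (hF u) 2
    calc ‖ι u‖ ^ 2 ≤ (CF * ‖g‖) ^ 2 := this
      _ = CF ^ 2 * ‖g‖ ^ 2 := by ring
  have hG2 : ‖G‖ ^ 2 ≤ Cγ ^ 2 * (CF ^ 2 * ‖g‖ ^ 2) := by
    have h1 := pow_le_pow_left₀ (norm_nonneg G) (hγb u) 2
    have h2 : Cγ ^ 2 * ‖ι u‖ ^ 2 ≤ Cγ ^ 2 * (CF ^ 2 * ‖g‖ ^ 2) :=
      mul_le_mul_of_nonneg_left hiu2 (sq_nonneg Cγ)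
    calc ‖G‖ ^ 2 ≤ (Cγ * ‖ι u‖) ^ 2 := h1
      _ = Cγ ^ 2 * ‖ι u‖ ^ 2 := by ring
      _ ≤ _ := h2
  have hBG : ‖B‖ ^ 2 + ‖G‖ ^ 2 ≤ K * ‖g‖ ^ 2 := by
    rw [hKdefK]; ring_nf; ring_nf at hB2 hG2; linarith
  have hdR : d = -R - B + G := by rw [hR]; abel
  have htri : ‖d‖ ≤ ‖R‖ + ‖B‖ + ‖G‖ := by
    rw [hdR]
    calc ‖-R - B + G‖ ≤ ‖-R - B‖ + ‖G‖ := norm_add_le _ _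
      _ ≤ ‖-R‖ + ‖B‖ + ‖G‖ := by linarith [norm_sub_le (-R) B]
      _ = ‖R‖ + ‖B‖ + ‖G‖ := by rw [norm_neg]
  have hd2 : ‖d‖ ^ 2 ≤ 3 * (‖R‖ ^ 2 + ‖B‖ ^ 2 + ‖G‖ ^ 2) := by
    have h1 := pow_le_pow_left₀ (norm_nonneg d) htri 2
    linarith only [h1, sq_nonneg (‖R‖ - ‖B‖), sq_nonneg (‖R‖ - ‖G‖), sq_nonneg (‖B‖ - ‖G‖)]
  have hkd : k * ‖d‖ ^ 2 ≤ 3 * k * ‖R‖ ^ 2 + 3 * k * (K * ‖g‖ ^ 2) := by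
    have a1 := mul_le_mul_of_nonneg_left hd2 hk.le
    have a2 := mul_le_mul_of_nonneg_left hBG hk.le
    linarith only [a1, a2, hk.le]
  have e1 : c * (k * ‖d‖ ^ 2) ≤ c * (3 * k * ‖R‖ ^ 2 + 3 * k * (K * ‖g‖ ^ 2)) :=
    mul_le_mul_of_nonneg_left hkd hc.le
  have hkR2 : (0:ℝ) ≤ k * ‖R‖ ^ 2 := mul_nonneg hk.le (sq_nonneg _)
  have e2 : c * (3 * k * ‖R‖ ^ 2) ≤ k * ‖R‖ ^ 2 := by
    linarith only [mul_le_mul_of_nonneg_right hc3 hkR2]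
  have e3 : c * (3 * k * (K * ‖g‖ ^ 2)) ≤ 3 * c * T * K * ‖g‖ ^ 2 := by
    have hnn : (0:ℝ) ≤ 3 * c * K * ‖g‖ ^ 2 := by positivity
    linarith only [mul_le_mul_of_nonneg_right hkT hnn]
  have e4 : c * (1 + 3 * T * K) * ‖g‖ ^ 2 ≤ α₀ * ‖g‖ ^ 2 :=
    mul_le_mul_of_nonneg_right hcg (sq_nonneg _)
  have e5 : c * ‖s‖ ^ 2 ≤ MA⁻¹ * ‖s‖ ^ 2 :=
    mul_le_mul_of_nonneg_right hcMA (sq_nonneg _)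
  rw [h2, h1, h3]
  linarith only [e1, e2, e3, e4, e5, hA2g, hMAs, hsign, hkR2]
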